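/- Elliptically contoured case of the direction density: let Σ be a p×p positive definite matrix, g(x) = (xᵀΣ⁻¹x)^{1/2}, and suppose x has density f_G(g(x)) with respect to Lebesgue measure on ℝᵖ (a probability density). Then the direction z' = x/‖x‖ has density ω_p⁻¹ (det Σ)^{-1/2} (z'ᵀΣ⁻¹z')^{-p/2} with respect to the surface measure on S^{p-1}, where ω_p = 2π^{p/2}/Γ(p/2) is the total surface measure of the unit sphere; in particular this distribution does not depend on f_G. -/

import Mathlib

open MeasureTheory Set
open scoped ENNReal Matrix
open scoped MatrixOrder

lemma mapWD {α β : Type*} [MeasurableSpace α] [MeasurableSpace β] (e : α ≃ᵐ β)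
    (μ : Measure α) (D : α → ℝ≥0∞) (hD : Measurable D) :
    (μ.withDensity D).map e = (μ.map e).withDensity (fun y => D (e.symm y)) := by
  ext s hs
  rw [Measure.map_apply e.measurable hs, withDensity_apply _ (e.measurable hs),
    withDensity_apply _ hs,
    setLIntegral_map (f := fun y => D (e.symm y)) hs (hD.comp e.symm.measurable) e.measurable]
  simp

lemma mapFst {α β : Type*} [MeasurableSpace α] [MeasurableSpace β] (μ : Measure α)
    (ν : Measure β) [SFinite μ] [SigmaFinite ν] (F : α × β → ℝ≥0∞) (hF : Measurable F) :
    ((μ.prod ν).withDensity F).map Prod.fst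
      = μ.withDensity (fun a => ∫⁻ b, F (a, b) ∂ν) := by
  ext s hs
  rw [Measure.map_apply measurable_fst hs, withDensity_apply _ (measurable_fst hs),
    withDensity_apply _ hs]
  have h1 : Prod.fst ⁻¹' s = s ×ˢ (univ : Set β) := by ext ⟨a, b⟩; simp
  rw [h1, ← Measure.prod_restrict s univ, Measure.restrict_univ,
    ← lintegral_prod F hF.aemeasurable]

lemma auxScale (n : ℕ) (G : ℝ → ℝ≥0∞) (hG : Measurable G) {a : ℝ} (ha : 0 < a) :
    ∫⁻ r in Ioi (0:ℝ), ENNReal.ofReal (r ^ n) * G (r * a)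
      = ENNReal.ofReal (a⁻¹ ^ (n + 1)) * ∫⁻ s in Ioi (0:ℝ), ENNReal.ofReal (s ^ n) * G s := by
  set f : ℝ → ℝ≥0∞ := fun s => ENNReal.ofReal (s ^ n) * G s with hf
  have hfm : Measurable f := (ENNReal.measurable_ofReal.comp (measurable_id.pow_const n)).mul hG
  have h1 : ∫⁻ r in Ioi (0:ℝ), f (a * r) = ENNReal.ofReal a⁻¹ * ∫⁻ s in Ioi (0:ℝ), f s := by
    have hpre : (a * ·) ⁻¹' Ioi (0:ℝ) = Ioi 0 := by
      rw [preimage_const_mul_Ioi₀ _ ha, zero_div]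
    calc ∫⁻ r in Ioi (0:ℝ), f (a * r)
        = ∫⁻ r in (a * ·) ⁻¹' Ioi (0:ℝ), f (a * r) := by rw [hpre]
      _ = ∫⁻ s in Ioi (0:ℝ), f s ∂(Measure.map (a * ·) volume) :=
          (setLIntegral_map measurableSet_Ioi hfm (measurable_const_mul a)).symm
      _ = ENNReal.ofReal a⁻¹ * ∫⁻ s in Ioi (0:ℝ), f s := by
          rw [Real.map_volume_mul_left (ne_of_gt ha)]
          rw [Measure.restrict_smul, lintegral_smul_measure, abs_of_pos (inv_pos.2 ha), smul_eq_mul]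
  have h2 : ∫⁻ r in Ioi (0:ℝ), f (a * r)
      = ENNReal.ofReal (a ^ n) * ∫⁻ r in Ioi (0:ℝ), ENNReal.ofReal (r ^ n) * G (r * a) := by
    rw [← lintegral_const_mul' _ _ ENNReal.ofReal_ne_top]
    refine setLIntegral_congr_fun measurableSet_Ioi (fun r hr => ?_)
    simp only [hf]
    rw [mul_pow, ENNReal.ofReal_mul (pow_nonneg ha.le n), mul_comm a r, mul_assoc]
  have hc0 : ENNReal.ofReal (a ^ n) ≠ 0 := (ENNReal.ofReal_pos.2 (pow_pos ha n)).ne'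
  have hct : ENNReal.ofReal (a ^ n) ≠ ⊤ := ENNReal.ofReal_ne_top
  have := h2.symm.trans h1
  calc ∫⁻ r in Ioi (0:ℝ), ENNReal.ofReal (r ^ n) * G (r * a)
      = (ENNReal.ofReal (a ^ n))⁻¹ * (ENNReal.ofReal (a ^ n) *
          ∫⁻ r in Ioi (0:ℝ), ENNReal.ofReal (r ^ n) * G (r * a)) := by
        rw [← mul_assoc, ENNReal.inv_mul_cancel hc0 hct, one_mul]
    _ = (ENNReal.ofReal (a ^ n))⁻¹ * (ENNReal.ofReal a⁻¹ * ∫⁻ s in Ioi (0:ℝ), f s) := by rw [this]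
    _ = ENNReal.ofReal (a⁻¹ ^ (n + 1)) * ∫⁻ s in Ioi (0:ℝ), f s := by
        rw [← mul_assoc, ← ENNReal.ofReal_inv_of_pos (pow_pos ha n),
          ← ENNReal.ofReal_mul (inv_nonneg.2 (pow_nonneg ha.le n))]
        congr 2
        rw [pow_succ, inv_pow]

lemma corePolar (p : ℕ) (hp : 0 < p) (g : EuclideanSpace ℝ (Fin p) → ℝ)
    (hgm : Measurable g)
    (hgh : ∀ (r : ℝ), 0 ≤ r → ∀ x : EuclideanSpace ℝ (Fin p), g (r • x) = r * g x)
    (hgpos : ∀ x : EuclideanSpace ℝ (Fin p), x ≠ 0 → 0 < g x)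
    (G : ℝ → ℝ≥0∞) (hG : Measurable G) :
    ((volume : Measure (EuclideanSpace ℝ (Fin p))).withDensity (fun x => G (g x))).map
        (fun x => ‖x‖⁻¹ • x)
      = Measure.map Subtype.val
          ((volume : Measure (EuclideanSpace ℝ (Fin p))).toSphere.withDensity
            (fun u => ENNReal.ofReal ((g u.1)⁻¹ ^ p) *
              ∫⁻ s in Ioi (0:ℝ), ENNReal.ofReal (s ^ (p - 1)) * G s)) := by
  haveI : Nonempty (Fin p) := ⟨⟨0, hp⟩⟩
  haveI hnt : Nontrivial (EuclideanSpace ℝ (Fin p)) := by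
    refine ⟨0, EuclideanSpace.single ⟨0, hp⟩ (1:ℝ), fun h => ?_⟩
    have := congrFun (congrArg (fun v : EuclideanSpace ℝ (Fin p) => (v : Fin p → ℝ)) h) ⟨0, hp⟩
    simp [EuclideanSpace.single_apply] at this
  have hc : MeasurableSet ({(0:EuclideanSpace ℝ (Fin p))}ᶜ) :=
    (measurableSet_singleton (0:EuclideanSpace ℝ (Fin p))).compl
  have hemb : MeasurableEmbedding
      (Subtype.val : ({(0:EuclideanSpace ℝ (Fin p))}ᶜ : Set _) → EuclideanSpace ℝ (Fin p)) :=
    MeasurableEmbedding.subtype_coe hc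
  set D : EuclideanSpace ℝ (Fin p) → ℝ≥0∞ := fun x => G (g x) with hD_def
  have hD : Measurable D := hG.comp hgm
  set ν := (volume : Measure (EuclideanSpace ℝ (Fin p))).withDensity D with hν_def
  have hdirm : Measurable (fun x : EuclideanSpace ℝ (Fin p) => ‖x‖⁻¹ • x) :=
    measurable_norm.inv.smul measurable_id
  have hν0 : ν {(0:EuclideanSpace ℝ (Fin p))} = 0 :=
    withDensity_absolutelyContinuous volume D (measure_singleton (0:EuclideanSpace ℝ (Fin p)))
  have hrest : ν.restrict ({(0:EuclideanSpace ℝ (Fin p))}ᶜ) = ν := by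
    refine Measure.restrict_eq_self_of_ae_mem ?_
    rw [ae_iff]
    convert hν0 using 2
    ext x
    simp
  have hmapcomap : (ν.comap Subtype.val).map
      (Subtype.val : ({(0:EuclideanSpace ℝ (Fin p))}ᶜ : Set _) → EuclideanSpace ℝ (Fin p)) = ν := by
    rw [hemb.map_comap, Subtype.range_coe, hrest]
  set e := (homeomorphUnitSphereProd (EuclideanSpace ℝ (Fin p))).toMeasurableEquiv with he_def
  have hcomapWD : ν.comap Subtype.val
      = ((volume : Measure (EuclideanSpace ℝ (Fin p))).comap
          (Subtype.val : ({(0:EuclideanSpace ℝ (Fin p))}ᶜ : Set _) → EuclideanSpace ℝ (Fin p))).withDensity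
          (fun x => D x.1) := by
    ext s hs
    rw [hemb.comap_apply, hν_def, withDensity_apply _ (hemb.measurableSet_image.2 hs),
      withDensity_apply _ hs, setLIntegral_subtype hc s (fun x => D x)]
  have hdim : Module.finrank ℝ (EuclideanSpace ℝ (Fin p)) = p := finrank_euclideanSpace_fin
  have hmapvol : ((volume : Measure (EuclideanSpace ℝ (Fin p))).comap Subtype.val).map e
      = (volume : Measure (EuclideanSpace ℝ (Fin p))).toSphere.prod
          (Measure.volumeIoiPow (p - 1)) := by
    have h2 := (MeasureTheory.Measure.measurePreserving_homeomorphUnitSphereProd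
      (volume : Measure (EuclideanSpace ℝ (Fin p)))).map_eq
    rw [hdim] at h2
    exact h2
  have key : ν.map (fun x : EuclideanSpace ℝ (Fin p) => ‖x‖⁻¹ • x)
      = Measure.map Subtype.val
          (((((volume : Measure (EuclideanSpace ℝ (Fin p))).toSphere.prod
              (Measure.volumeIoiPow (p - 1))).withDensity
            (fun y => D (e.symm y).1)).map Prod.fst)) := by
    conv_lhs => rw [← hmapcomap]
    rw [Measure.map_map hdirm hemb.measurable]
    have hfun : ((fun x : EuclideanSpace ℝ (Fin p) => ‖x‖⁻¹ • x) ∘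
        (Subtype.val : ({(0:EuclideanSpace ℝ (Fin p))}ᶜ : Set _) → EuclideanSpace ℝ (Fin p)))
        = (Subtype.val ∘ Prod.fst) ∘ e := by
      funext x; simp [e, homeomorphUnitSphereProd, homeomorphSphereProd]
    rw [hfun, ← Measure.map_map (measurable_subtype_coe.comp measurable_fst) e.measurable,
      ← Measure.map_map measurable_subtype_coe measurable_fst, hcomapWD,
      mapWD e _ (fun x => D x.1) (hD.comp measurable_subtype_coe), hmapvol]
  rw [key]
  congr 1
  rw [mapFst _ _ (fun y => D (e.symm y).1)
    (hD.comp (measurable_subtype_coe.comp e.symm.measurable))]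
  refine congrArg _ (funext fun u => ?_)
  have hu : (u.1 : EuclideanSpace ℝ (Fin p)) ≠ 0 := ne_zero_of_mem_unit_sphere u
  have ha : 0 < g u.1 := hgpos _ hu
  calc ∫⁻ b, D (e.symm (u, b)).1 ∂(Measure.volumeIoiPow (p - 1))
      = ∫⁻ b : Ioi (0:ℝ), G (b.1 * g u.1) ∂(Measure.volumeIoiPow (p - 1)) := by
        refine lintegral_congr fun b => ?_
        have hval : ((e.symm (u, b)).1 : EuclideanSpace ℝ (Fin p)) = (b.1 : ℝ) • u.1 := rfl
        rw [hD_def]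
        simp only [hval]
        rw [hgh b.1 (le_of_lt b.2) u.1]
    _ = ∫⁻ b : Ioi (0:ℝ), ENNReal.ofReal (b.1 ^ (p - 1)) * G (b.1 * g u.1)
          ∂((volume : Measure ℝ).comap Subtype.val) := by
        rw [Measure.volumeIoiPow]
        exact lintegral_withDensity_eq_lintegral_mul _
          (ENNReal.measurable_ofReal.comp (measurable_subtype_coe.pow_const (p - 1)))
          (hG.comp (measurable_subtype_coe.mul_const _))
    _ = ∫⁻ b in Ioi (0:ℝ), ENNReal.ofReal (b ^ (p - 1)) * G (b * g u.1) :=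
        lintegral_subtype_comap measurableSet_Ioi
          (fun b => ENNReal.ofReal (b ^ (p - 1)) * G (b * g u.1))
    _ = ENNReal.ofReal ((g u.1)⁻¹ ^ p) *
          ∫⁻ s in Ioi (0:ℝ), ENNReal.ofReal (s ^ (p - 1)) * G s := by
        have h3 := auxScale (p - 1) G hG ha
        rw [Nat.sub_add_cancel hp] at h3
        exact h3

/-- Elliptically contoured case: if `x` has density `f_G((xᵀΣ⁻¹x)^{1/2})` with respect
to Lebesgue measure on `ℝᵖ` with `Σ` positive definite, then the direction `z' = x/‖x‖`
has density `ω_p⁻¹ (det Σ)^{-1/2} (z'ᵀΣ⁻¹z')^{-p/2}` with respect to the surface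
measure on the unit sphere, where `ω_p = 2π^{p/2}/Γ(p/2)`; in particular this does not
depend on `f_G`. -/
theorem stmt19 (p : ℕ) (hp : 0 < p)
    (S : Matrix (Fin p) (Fin p) ℝ) (hS : S.PosDef)
    (g : EuclideanSpace ℝ (Fin p) → ℝ)
    (hg : ∀ x : EuclideanSpace ℝ (Fin p),
      g x = Real.sqrt (∑ i, ∑ j, S⁻¹ i j * x i * x j))
    (fG : ℝ → ℝ) (hfGmeas : Measurable fG) (hfGnn : ∀ t, 0 ≤ fG t)
    (μ : Measure (EuclideanSpace ℝ (Fin p)))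
    (hμ : μ = volume.withDensity fun x => ENNReal.ofReal (fG (g x)))
    (hprob : IsProbabilityMeasure μ) :
    Measure.map (fun x => ‖x‖⁻¹ • x) μ =
      Measure.map Subtype.val
        (((volume : Measure (EuclideanSpace ℝ (Fin p))).toSphere).withDensity
          fun u => ENNReal.ofReal
            ((2 * Real.pi ^ ((p : ℝ) / 2) / Real.Gamma ((p : ℝ) / 2))⁻¹ *
              (Real.sqrt S.det)⁻¹ *
              (∑ i, ∑ j, S⁻¹ i j * u.1 i * u.1 j) ^ (-(p : ℝ) / 2))) := by
  haveI : Nonempty (Fin p) := ⟨⟨0, hp⟩⟩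
  set Q : EuclideanSpace ℝ (Fin p) → ℝ := fun x => ∑ i, ∑ j, S⁻¹ i j * x i * x j with hQ_def
  have hQd : ∀ x : EuclideanSpace ℝ (Fin p),
      Q x = (x : Fin p → ℝ) ⬝ᵥ (S⁻¹ *ᵥ (x : Fin p → ℝ)) := by
    intro x
    simp only [hQ_def, dotProduct, Matrix.mulVec, Finset.mul_sum]
    exact Finset.sum_congr rfl fun i _ => Finset.sum_congr rfl fun j _ => by ring
  have hSi : (S⁻¹).PosDef := hS.inv
  have hQpos : ∀ x : EuclideanSpace ℝ (Fin p), x ≠ 0 → 0 < Q x := by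
    intro x hx
    have := hSi.dotProduct_mulVec_pos (x := (x : Fin p → ℝ)) (by simpa using hx)
    simpa [hQd x] using this
  have hQ0 : Q 0 = 0 := by simp [hQ_def]
  have hQnonneg : ∀ x, 0 ≤ Q x := by
    intro x
    rcases eq_or_ne x 0 with rfl | hx
    · simp [hQ0]
    · exact (hQpos x hx).le
  have hgpos : ∀ x : EuclideanSpace ℝ (Fin p), x ≠ 0 → 0 < g x := by
    intro x hx; rw [hg]; exact Real.sqrt_pos.2 (hQpos x hx)
  have hxi : ∀ i, Measurable fun x : EuclideanSpace ℝ (Fin p) => x i :=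
    fun i => (measurable_pi_apply i).comp (PiLp.continuous_ofLp 2 _).measurable
  have hQm : Measurable Q := by
    refine Finset.measurable_sum _ fun i _ => Finset.measurable_sum _ fun j _ => ?_
    exact (measurable_const.mul (hxi i)).mul (hxi j)
  have hgm : Measurable g := by
    have : g = fun x => Real.sqrt (Q x) := funext hg
    rw [this]
    exact Real.continuous_sqrt.measurable.comp hQm
  have hgh : ∀ (r : ℝ), 0 ≤ r → ∀ x : EuclideanSpace ℝ (Fin p), g (r • x) = r * g x := by
    intro r hr x
    rw [hg, hg]
    have h1 : (∑ i, ∑ j, S⁻¹ i j * (r • x) i * (r • x) j)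
        = r ^ 2 * ∑ i, ∑ j, S⁻¹ i j * x i * x j := by
      rw [Finset.mul_sum]
      refine Finset.sum_congr rfl fun i _ => ?_
      rw [Finset.mul_sum]
      refine Finset.sum_congr rfl fun j _ => ?_
      have e1 : (r • x) i = r * x i := rfl
      have e2 : (r • x) j = r * x j := rfl
      rw [e1, e2]; ring
    rw [h1, Real.sqrt_mul (sq_nonneg r), Real.sqrt_sq hr]
  -- the matrix square root
  set B := CFC.sqrt S⁻¹ with hB_def
  have hBsq : B * B = S⁻¹ := CFC.sqrt_mul_sqrt_self S⁻¹ hSi.posSemidef.nonneg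
  have hBt : Bᵀ = B := by
    rw [← Matrix.conjTranspose_eq_transpose_of_trivial]
    exact (Matrix.nonneg_iff_posSemidef.1 (CFC.sqrt_nonneg S⁻¹)).1
  have hnormT : ∀ x : EuclideanSpace ℝ (Fin p), ‖Matrix.toEuclideanLin B x‖ = g x := by
    intro x
    rw [hg, EuclideanSpace.norm_eq]
    congr 1
    have hsum : ∀ i, ‖Matrix.toEuclideanLin B x i‖ ^ 2 = ((B *ᵥ (x : Fin p → ℝ)) i) ^ 2 := by
      intro i; rw [Real.norm_eq_abs, sq_abs]; rfl
    simp only [hsum]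
    have hdot : ∑ i, ((B *ᵥ (x : Fin p → ℝ)) i) ^ 2
        = (B *ᵥ (x : Fin p → ℝ)) ⬝ᵥ (B *ᵥ (x : Fin p → ℝ)) := by
      simp [dotProduct, pow_two]
    rw [hdot]
    have : (x : Fin p → ℝ) ⬝ᵥ (S⁻¹ *ᵥ (x : Fin p → ℝ))
        = (B *ᵥ (x : Fin p → ℝ)) ⬝ᵥ (B *ᵥ (x : Fin p → ℝ)) := by
      rw [← hBsq, ← Matrix.mulVec_mulVec, Matrix.dotProduct_mulVec, ← Matrix.mulVec_transpose,
        hBt]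
    rw [← this, ← hQd]
  -- determinant facts
  have hdetS : 0 < S.det := hS.det_pos
  have hBdet2 : B.det * B.det = S.det⁻¹ := by
    have := congrArg Matrix.det hBsq
    rw [Matrix.det_mul] at this
    rw [this, Matrix.det_nonsing_inv, Ring.inverse_eq_inv]
  have hBdet_ne : B.det ≠ 0 := by
    intro h
    rw [h, zero_mul] at hBdet2
    exact (inv_pos.2 hdetS).ne hBdet2
  have hTdet : LinearMap.det (Matrix.toEuclideanLin B) = B.det := by
    rw [Matrix.toEuclideanLin_eq_toLin]
    exact LinearMap.det_toLin _ B
  have habs : |(B.det)⁻¹| = Real.sqrt S.det := by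
    rw [abs_inv]
    have h1 : |B.det| = (Real.sqrt S.det)⁻¹ := by
      rw [← Real.sqrt_sq_eq_abs, pow_two, hBdet2, Real.sqrt_inv]
    rw [h1, inv_inv]
  -- volume of the ellipsoid
  have hset : {x : EuclideanSpace ℝ (Fin p) | g x ≤ 1}
      = (Matrix.toEuclideanLin B) ⁻¹' Metric.closedBall 0 1 := by
    ext x
    simp only [Set.mem_setOf_eq, Set.mem_preimage, Metric.mem_closedBall, dist_zero_right,
      hnormT x]
  have hvolcb : volume (Metric.closedBall (0 : EuclideanSpace ℝ (Fin p)) 1)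
      = ENNReal.ofReal (Real.sqrt Real.pi ^ p / Real.Gamma ((p : ℝ) / 2 + 1)) := by
    rw [EuclideanSpace.volume_closedBall]
    simp [Fintype.card_fin]
  have hvol1 : volume {x : EuclideanSpace ℝ (Fin p) | g x ≤ 1}
      = ENNReal.ofReal (Real.sqrt S.det *
          (Real.sqrt Real.pi ^ p / Real.Gamma ((p : ℝ) / 2 + 1))) := by
    rw [hset, MeasureTheory.Measure.addHaar_preimage_linearMap volume
      (by rw [hTdet]; exact hBdet_ne), hTdet, habs, hvolcb, ← ENNReal.ofReal_mul
      (Real.sqrt_nonneg _)]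
  -- apply the core polar lemma to the indicator density
  set G₀ : ℝ → ℝ≥0∞ := (Ioc (0:ℝ) 1).indicator (fun _ => (1:ℝ≥0∞)) with hG₀_def
  have hG₀m : Measurable G₀ := measurable_const.indicator measurableSet_Ioc
  have hdirm : Measurable (fun x : EuclideanSpace ℝ (Fin p) => ‖x‖⁻¹ • x) :=
    measurable_norm.inv.smul measurable_id
  have hcore₀ := corePolar p hp g hgm hgh hgpos G₀ hG₀m
  -- I₀ = ofReal (1/p)
  have hI₀ : (∫⁻ s in Ioi (0:ℝ), ENNReal.ofReal (s ^ (p - 1)) * G₀ s)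
      = ENNReal.ofReal ((p : ℝ))⁻¹ := by
    have hpt : ∀ s : ℝ, ENNReal.ofReal (s ^ (p - 1)) * G₀ s
        = (Ioc (0:ℝ) 1).indicator (fun s => ENNReal.ofReal (s ^ (p - 1))) s := by
      intro s
      by_cases hs : s ∈ Ioc (0:ℝ) 1 <;>
        simp [hG₀_def, Set.indicator_of_mem, Set.indicator_of_notMem, hs]
    rw [lintegral_congr hpt, lintegral_indicator measurableSet_Ioc,
      Measure.restrict_restrict measurableSet_Ioc,
      Set.inter_eq_left.mpr Ioc_subset_Ioi_self]
    rw [← MeasureTheory.ofReal_integral_eq_lintegral_ofReal (intervalIntegral.intervalIntegrable_pow (p-1)).1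
      ((ae_restrict_mem measurableSet_Ioc).mono fun s hs => pow_nonneg hs.1.le _)]
    congr 1
    rw [← intervalIntegral.integral_of_le zero_le_one, integral_pow]
    rw [Nat.sub_add_cancel hp, zero_pow hp.ne', sub_zero, Nat.cast_sub hp, Nat.cast_one]
    rw [sub_add_cancel, one_pow, one_div]
  -- total mass of the indicator measure: volume of the ellipsoid
  have huniv₀L : ((volume.withDensity (fun x => G₀ (g x))).map
      (fun x : EuclideanSpace ℝ (Fin p) => ‖x‖⁻¹ • x)) Set.univ
      = volume {x : EuclideanSpace ℝ (Fin p) | g x ≤ 1} := by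
    rw [Measure.map_apply hdirm MeasurableSet.univ, Set.preimage_univ,
      withDensity_apply _ MeasurableSet.univ, Measure.restrict_univ]
    have hpt : ∀ x : EuclideanSpace ℝ (Fin p), G₀ (g x)
        = (g ⁻¹' (Ioc (0:ℝ) 1)).indicator (fun _ => (1:ℝ≥0∞)) x := by
      intro x
      by_cases hx : g x ∈ Ioc (0:ℝ) 1 <;>
        simp [hG₀_def, Set.indicator_of_mem, Set.indicator_of_notMem, hx]
    rw [lintegral_congr hpt, lintegral_indicator (hgm measurableSet_Ioc), setLIntegral_one]
    have hseteq : g ⁻¹' (Ioc (0:ℝ) 1) = {x : EuclideanSpace ℝ (Fin p) | g x ≤ 1} \ {0} := by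
      ext x
      simp only [Set.mem_preimage, Set.mem_Ioc, Set.mem_diff, Set.mem_setOf_eq,
        Set.mem_singleton_iff]
      constructor
      · rintro ⟨h1, h2⟩
        refine ⟨h2, fun hx => ?_⟩
        subst hx
        have : g 0 = 0 := by rw [hg]; simpa using congrArg Real.sqrt hQ0
        rw [this] at h1; exact lt_irrefl _ h1
      · rintro ⟨h1, h2⟩
        exact ⟨hgpos x h2, h1⟩
    rw [hseteq, measure_diff_null (measure_singleton _)]
  have hmJ : Measurable fun u : Metric.sphere (0 : EuclideanSpace ℝ (Fin p)) 1 =>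
      ENNReal.ofReal ((g u.1)⁻¹ ^ p) :=
    ENNReal.measurable_ofReal.comp (((hgm.comp measurable_subtype_coe).inv).pow_const p)
  set J := ∫⁻ u, ENNReal.ofReal ((g u.1)⁻¹ ^ p)
      ∂(volume : Measure (EuclideanSpace ℝ (Fin p))).toSphere with hJ_def
  have hunivR : ∀ C : ℝ≥0∞, (Measure.map Subtype.val
      (((volume : Measure (EuclideanSpace ℝ (Fin p))).toSphere).withDensity
        (fun u => ENNReal.ofReal ((g u.1)⁻¹ ^ p) * C))) Set.univ = J * C := by
    intro C
    rw [Measure.map_apply measurable_subtype_coe MeasurableSet.univ, Set.preimage_univ,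
      withDensity_apply _ MeasurableSet.univ, Measure.restrict_univ,
      lintegral_mul_const C hmJ]
  have hE1 : volume {x : EuclideanSpace ℝ (Fin p) | g x ≤ 1}
      = J * ENNReal.ofReal ((p : ℝ))⁻¹ := by
    rw [← hI₀, ← hunivR, ← hcore₀, huniv₀L]
  -- compute J
  have hpR : (0:ℝ) < (p:ℝ) := Nat.cast_pos.2 hp
  have hJval : J = ENNReal.ofReal (Real.sqrt S.det *
      (Real.sqrt Real.pi ^ p / Real.Gamma ((p : ℝ) / 2 + 1)) * p) := by
    have h1 : J * (ENNReal.ofReal ((p : ℝ))⁻¹ * ENNReal.ofReal (p : ℝ)) = J := by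
      rw [← ENNReal.ofReal_mul (inv_nonneg.2 hpR.le), inv_mul_cancel₀ hpR.ne',
        ENNReal.ofReal_one, mul_one]
    calc J = J * (ENNReal.ofReal ((p : ℝ))⁻¹ * ENNReal.ofReal (p : ℝ)) := h1.symm
      _ = (J * ENNReal.ofReal ((p : ℝ))⁻¹) * ENNReal.ofReal (p : ℝ) := by rw [mul_assoc]
      _ = volume {x : EuclideanSpace ℝ (Fin p) | g x ≤ 1} * ENNReal.ofReal (p : ℝ) := by
          rw [← hE1]
      _ = ENNReal.ofReal (Real.sqrt S.det *
            (Real.sqrt Real.pi ^ p / Real.Gamma ((p : ℝ) / 2 + 1)) * p) := by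
          rw [hvol1, ← ENNReal.ofReal_mul (by positivity)]
  have hGamma_pos : 0 < Real.Gamma ((p : ℝ) / 2) := Real.Gamma_pos_of_pos (by positivity)
  set ω : ℝ := 2 * Real.pi ^ ((p : ℝ) / 2) / Real.Gamma ((p : ℝ) / 2) with hω_def
  have hω_pos : 0 < ω := by
    have : (0:ℝ) < Real.pi ^ ((p : ℝ) / 2) := Real.rpow_pos_of_pos Real.pi_pos _
    positivity
  have hreal : Real.sqrt S.det *
      (Real.sqrt Real.pi ^ p / Real.Gamma ((p : ℝ) / 2 + 1)) * p
      = Real.sqrt S.det * ω := by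
    have hpi : Real.sqrt Real.pi ^ p = Real.pi ^ ((p : ℝ) / 2) := by
      rw [Real.sqrt_eq_rpow, ← Real.rpow_natCast (Real.pi ^ (1/(2:ℝ))) p,
        ← Real.rpow_mul Real.pi_pos.le]
      congr 1
      ring
    rw [hpi, Real.Gamma_add_one (by positivity), hω_def]
    field_simp
  have hJω : J = ENNReal.ofReal (Real.sqrt S.det * ω) := by rw [hJval, hreal]
  have hJ_ne0 : J ≠ 0 := by
    rw [hJω]
    exact (ENNReal.ofReal_pos.2 (by positivity)).ne'
  have hJ_netop : J ≠ ⊤ := by rw [hJω]; exact ENNReal.ofReal_ne_top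
  -- apply the core lemma to fG
  have hcore := corePolar p hp g hgm hgh hgpos (fun t => ENNReal.ofReal (fG t))
    (ENNReal.measurable_ofReal.comp hfGmeas)
  set I := ∫⁻ s in Ioi (0:ℝ), ENNReal.ofReal (s ^ (p - 1)) * ENNReal.ofReal (fG s) with hI_def
  have hmain : Measure.map (fun x => ‖x‖⁻¹ • x) μ
      = Measure.map Subtype.val
          (((volume : Measure (EuclideanSpace ℝ (Fin p))).toSphere).withDensity
            (fun u => ENNReal.ofReal ((g u.1)⁻¹ ^ p) * I)) := by
    rw [hμ]; exact hcore
  have hE2 : (1:ℝ≥0∞) = J * I := by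
    have hL : (Measure.map (fun x => ‖x‖⁻¹ • x) μ) Set.univ = 1 := by
      rw [Measure.map_apply hdirm MeasurableSet.univ, Set.preimage_univ]
      exact hprob.measure_univ
    rw [← hL, hmain, hunivR]
  have hIval : I = ENNReal.ofReal ((Real.sqrt S.det * ω)⁻¹) := by
    have : I = J⁻¹ := by
      calc I = J⁻¹ * (J * I) := by
            rw [← mul_assoc, ENNReal.inv_mul_cancel hJ_ne0 hJ_netop, one_mul]
        _ = J⁻¹ * 1 := by rw [← hE2]
        _ = J⁻¹ := mul_one _
    rw [this, hJω, ← ENNReal.ofReal_inv_of_pos (by positivity)]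
  -- final assembly
  rw [hmain, hIval]
  congr 1
  refine congrArg _ (funext fun u => ?_)
  have hu : (u.1 : EuclideanSpace ℝ (Fin p)) ≠ 0 := ne_zero_of_mem_unit_sphere u
  have hgu : 0 < g u.1 := hgpos _ hu
  have hQu : Q u.1 = (g u.1) ^ 2 := by
    rw [hg]
    exact (Real.sq_sqrt (hQnonneg u.1)).symm
  have hrpow : (Q u.1) ^ (-(p:ℝ) / 2) = (g u.1)⁻¹ ^ p := by
    rw [hQu, ← Real.rpow_natCast (g u.1) 2, ← Real.rpow_mul hgu.le,
      show ((2:ℕ):ℝ) * (-(p:ℝ)/2) = -(p:ℝ) by push_cast; ring,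
      Real.rpow_neg hgu.le, Real.rpow_natCast, inv_pow]
  have : (∑ i, ∑ j, S⁻¹ i j * (u.1 : EuclideanSpace ℝ (Fin p)) i * u.1 j) = Q u.1 := rfl
  rw [this, hrpow, ← ENNReal.ofReal_mul (by positivity)]
  congr 1
  rw [mul_inv]
  ring
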